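/- Frame norm bounds for the generator: if g ∈ L²(ℝ) and α, β > 0 are such that {E_{mβ}T_{nα} g}_{m,n∈ℤ} is a frame for L²(ℝ) with frame bounds A, B (i.e., A∥f∥² ≤ Σ_{m,n} |⟨f, E_{mβ}T_{nα}g⟩|² ≤ B∥f∥² for all f), then A·αβ ≤ ∥g∥²₂ ≤ B·αβ. -/

import Mathlib

open MeasureTheory Complex Set
open scoped Real ENNReal

/-- Modulation operator `(E_β f)(t) = exp(2πiβt) f(t)`. -/
noncomputable def Emod (β : ℝ) (f : ℝ → ℂ) : ℝ → ℂ :=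
  fun t => Complex.exp (2 * Real.pi * Complex.I * β * t) * f t

/-- Translation operator `(T_α f)(t) = f(t - α)`. -/
noncomputable def Ttrans (α : ℝ) (f : ℝ → ℂ) : ℝ → ℂ := fun t => f (t - α)

/-- Time-frequency shift `π(x, ω) = E_ω T_x`. -/
noncomputable def timeFreq (χ : ℝ × ℝ) (f : ℝ → ℂ) : ℝ → ℂ :=
  Emod χ.2 (Ttrans χ.1 f)

/-- The cocycle `c(χ₁, χ₂) = exp(-2πi ω₂ x₁)`. -/
noncomputable def cocy (χ₁ χ₂ : ℝ × ℝ) : ℂ :=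
  Complex.exp (-(2 * Real.pi * Complex.I * χ₂.2 * χ₁.1))

/-- The `L²` inner product, linear in the first entry: `⟨f, g⟩ = ∫ f(t) conj(g(t)) dt`. -/
noncomputable def inn (f g : ℝ → ℂ) : ℂ := ∫ t : ℝ, f t * (starRingEnd ℂ) (g t)

lemma rowP {T : ℝ} (hT : 0 < T) {a δ : ℝ} (hδ : 0 < δ) (hδT : δ ≤ T) {h : ℝ → ℂ}
    (hsm : StronglyMeasurable h) (hmem : MemLp h 2 (volume : Measure ℝ)) :
    ∑' m : ℤ, ENNReal.ofReal
        (‖∫ t in Set.Ioc a (a + δ), Complex.exp (2 * Real.pi * Complex.I * (-m) * t / T) * h t‖ ^ 2)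
      = ENNReal.ofReal T * ∫⁻ t in Set.Ioc a (a + δ), (‖h t‖₊ : ℝ≥0∞) ^ 2 := by
  haveI : Fact (0 < T) := ⟨hT⟩
  set J : Set ℝ := Set.Ioc a (a + δ) with hJ
  have hJm : MeasurableSet J := measurableSet_Ioc
  have hJsub : J ⊆ Set.Ioc a (a + T) := Set.Ioc_subset_Ioc le_rfl (by linarith)
  set F : ℝ → ℂ := J.indicator h with hF
  have hFsm : StronglyMeasurable F := hsm.indicator hJm
  -- integrability of ‖h‖^2
  have hint : Integrable (fun t => ‖h t‖ ^ 2) (volume : Measure ℝ) := by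
    have := hmem.integrable_norm_rpow (by norm_num) (by norm_num)
    simpa [ENNReal.toReal_ofNat, Real.rpow_natCast] using this
  -- the lift to the circle
  set Ft : AddCircle T → ℂ := AddCircle.liftIoc T a F with hFt
  have hFt_coe : ∀ x ∈ Set.Ioc a (a + T), Ft x = F x := fun x hx =>
    AddCircle.liftIoc_coe_apply hx
  have hFtm : StronglyMeasurable Ft := by
    have : Ft = F ∘ (fun y : Set.Ioc a (a + T) => (y : ℝ)) ∘ (AddCircle.measurableEquivIoc T a) := rfl
    rw [this]
    exact hFsm.comp_measurable
      (measurable_subtype_coe.comp (AddCircle.measurableEquivIoc T a).measurable)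
  -- lintegral of ‖Ft‖² over the circle
  have hFt_lint : (∫⁻ x, (‖Ft x‖₊ : ℝ≥0∞) ^ 2 ∂(@AddCircle.haarAddCircle T ⟨hT⟩))
      = (ENNReal.ofReal T)⁻¹ * ∫⁻ t in J, (‖h t‖₊ : ℝ≥0∞) ^ 2 := by
    have h1 : (∫⁻ x in Set.Ioc a (a + T), (‖Ft x‖₊ : ℝ≥0∞) ^ 2)
        = ∫⁻ x : AddCircle T, (‖Ft x‖₊ : ℝ≥0∞) ^ 2 :=
      AddCircle.lintegral_preimage T a (fun b => (‖Ft b‖₊ : ℝ≥0∞) ^ 2)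
    have h2 : (∫⁻ x in Set.Ioc a (a + T), (‖Ft x‖₊ : ℝ≥0∞) ^ 2)
        = ∫⁻ t in J, (‖h t‖₊ : ℝ≥0∞) ^ 2 := by
      rw [setLIntegral_congr_fun measurableSet_Ioc
        (fun x hx => by rw [hFt_coe x hx])]
      have : ∀ x : ℝ, (‖F x‖₊ : ℝ≥0∞) ^ 2 = J.indicator (fun t => (‖h t‖₊ : ℝ≥0∞) ^ 2) x := by
        intro x
        by_cases hx : x ∈ J <;> simp [hF, Set.indicator_of_mem, Set.indicator_of_notMem, hx]
      simp_rw [this]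
      rw [lintegral_indicator measurableSet_Ioc, Measure.restrict_restrict hJm,
        Set.inter_eq_self_of_subset_left hJsub]
    have h3 : (∫⁻ x : AddCircle T, (‖Ft x‖₊ : ℝ≥0∞) ^ 2 ∂(volume : Measure (AddCircle T)))
        = ENNReal.ofReal T * ∫⁻ x, (‖Ft x‖₊ : ℝ≥0∞) ^ 2 ∂(@AddCircle.haarAddCircle T ⟨hT⟩) := by
      rw [AddCircle.volume_eq_smul_haarAddCircle, lintegral_smul_measure, smul_eq_mul]
    rw [← h2, h1, h3, ← mul_assoc, ENNReal.inv_mul_cancel (by simpa using hT) ENNReal.ofReal_ne_top,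
      one_mul]
  -- finiteness of the lintegral of ‖h‖² on J
  have hJfin : (∫⁻ t in J, (‖h t‖₊ : ℝ≥0∞) ^ 2) < ⊤ := by
    have h0 : (∫⁻ t, (‖h t‖₊ : ℝ≥0∞) ^ 2) < ⊤ := by
      have := hmem.2
      rw [eLpNorm_eq_lintegral_rpow_enorm_toReal two_ne_zero ENNReal.ofNat_ne_top] at this
      simp only [enorm_eq_nnnorm] at this
      have h1 := (ENNReal.rpow_lt_top_iff_of_pos (by norm_num : (0:ℝ) < 1 / (2:ℝ≥0∞).toReal)).mp this
      have h2 : ((2:ℝ≥0∞).toReal) = ((2:ℕ):ℝ) := by norm_num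
      simp only [h2, ENNReal.rpow_natCast] at h1
      simpa using h1
    exact lt_of_le_of_lt (setLIntegral_le_lintegral _ _) h0
  -- Ft is in L²(haar)
  have hFt_mem : MemLp Ft 2 (@AddCircle.haarAddCircle T ⟨hT⟩) := by
    refine ⟨hFtm.aestronglyMeasurable, ?_⟩
    rw [eLpNorm_eq_lintegral_rpow_enorm_toReal two_ne_zero ENNReal.ofNat_ne_top]
    simp only [enorm_eq_nnnorm]
    refine ENNReal.rpow_lt_top_of_nonneg (by positivity) ?_
    have : (∫⁻ x, (‖Ft x‖₊ : ℝ≥0∞) ^ (2:ℝ≥0∞).toReal ∂(@AddCircle.haarAddCircle T ⟨hT⟩))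
        = (ENNReal.ofReal T)⁻¹ * ∫⁻ t in J, (‖h t‖₊ : ℝ≥0∞) ^ 2 := by
      rw [← hFt_lint]
      have h2 : ((2:ℝ≥0∞).toReal) = ((2:ℕ):ℝ) := by norm_num
      simp only [h2, ENNReal.rpow_natCast]
    rw [this]
    exact ENNReal.mul_ne_top (by simpa using hT) hJfin.ne
  -- Parseval
  set FL : Lp ℂ 2 (@AddCircle.haarAddCircle T ⟨hT⟩) := hFt_mem.toLp Ft with hFL
  have hFLae : (FL : AddCircle T → ℂ) =ᵐ[@AddCircle.haarAddCircle T ⟨hT⟩] Ft :=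
    MemLp.coeFn_toLp hFt_mem
  have hcoeff : ∀ m : ℤ, fourierCoeff (FL : AddCircle T → ℂ) m = fourierCoeff Ft m := by
    intro m
    simp only [fourierCoeff]
    exact integral_congr_ae (hFLae.mono fun x hx => by simp only []; rw [hx])
  have hparseval := tsum_sq_fourierCoeff FL
  have hsummable : Summable (fun m : ℤ => ‖fourierCoeff (FL : AddCircle T → ℂ) m‖ ^ 2) := by
    have h1 : ∀ m : ℤ, fourierCoeff (FL : AddCircle T → ℂ) m = fourierBasis.repr FL m :=
      fun m => (fourierBasis_repr FL m).symm
    have h2 := (lp.memℓp (fourierBasis.repr FL)).summable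
      (by norm_num : 0 < (2:ℝ≥0∞).toReal)
    have h3 : ((2:ℝ≥0∞).toReal) = ((2:ℕ):ℝ) := by norm_num
    simp only [h3, Real.rpow_natCast] at h2
    simpa only [h1] using h2
  -- value of the Fourier coefficients
  have hcoeff_val : ∀ m : ℤ, fourierCoeff Ft m
      = (1 / T : ℝ) • ∫ t in J, Complex.exp (2 * Real.pi * Complex.I * (-m) * t / T) * h t := by
    intro m
    rw [show Ft = AddCircle.liftIoc T a F from rfl, fourierCoeff_eq_intervalIntegral _ m a]
    congr 1
    rw [intervalIntegral.integral_of_le (by linarith : a ≤ a + T)]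
    have key : ∀ x ∈ Set.Ioc a (a + T),
        fourier (-m) (x : AddCircle T) • (AddCircle.liftIoc T a F) (x : AddCircle T)
          = J.indicator (fun t => Complex.exp (2 * Real.pi * Complex.I * (-m) * t / T) * h t) x := by
      intro x hx
      rw [← hFt, hFt_coe x hx]
      by_cases hxJ : x ∈ J
      · rw [Set.indicator_of_mem hxJ, hF, Set.indicator_of_mem hxJ, fourier_coe_apply,
          smul_eq_mul]
        push_cast
        ring_nf
      · rw [Set.indicator_of_notMem hxJ, hF, Set.indicator_of_notMem hxJ, smul_zero]
    rw [setIntegral_congr_fun measurableSet_Ioc key, setIntegral_indicator hJm,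
      Set.inter_eq_self_of_subset_right hJsub]
  -- Parseval RHS as a lintegral
  have hr : ENNReal.ofReal (∫ x, ‖(FL : AddCircle T → ℂ) x‖ ^ 2 ∂(@AddCircle.haarAddCircle T ⟨hT⟩))
      = (ENNReal.ofReal T)⁻¹ * ∫⁻ t in J, (‖h t‖₊ : ℝ≥0∞) ^ 2 := by
    have e1 : ∫ x, ‖(FL : AddCircle T → ℂ) x‖ ^ 2 ∂(@AddCircle.haarAddCircle T ⟨hT⟩)
        = ∫ x, ‖Ft x‖ ^ 2 ∂(@AddCircle.haarAddCircle T ⟨hT⟩) :=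
      integral_congr_ae (hFLae.mono fun x hx => by simp only []; rw [hx])
    have hint2 : Integrable (fun x => ‖Ft x‖ ^ 2) (@AddCircle.haarAddCircle T ⟨hT⟩) := by
      have := hFt_mem.integrable_norm_rpow two_ne_zero ENNReal.ofNat_ne_top
      have h3 : ((2:ℝ≥0∞).toReal) = ((2:ℕ):ℝ) := by norm_num
      simp only [h3, Real.rpow_natCast] at this
      simpa using this
    rw [e1, MeasureTheory.ofReal_integral_eq_lintegral_ofReal hint2
      (Filter.Eventually.of_forall fun x => by positivity), ← hFt_lint]
    congr 1
    ext x
    rw [ENNReal.ofReal_pow (norm_nonneg _), ofReal_norm, enorm_eq_nnnorm]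
  -- put everything together
  set c : ℤ → ℝ := fun m =>
    ‖∫ t in J, Complex.exp (2 * Real.pi * Complex.I * (-m) * t / T) * h t‖ ^ 2 with hc
  have hc_eq : ∀ m : ℤ, ‖fourierCoeff (FL : AddCircle T → ℂ) m‖ ^ 2 = (1/T)^2 * c m := by
    intro m
    rw [hcoeff, hcoeff_val, norm_smul, Real.norm_eq_abs, abs_of_pos (by positivity), mul_pow]
  simp_rw [hc_eq] at hparseval hsummable
  have hsum_c : Summable c := by
    have := (summable_mul_left_iff (by positivity : ((1:ℝ)/T)^2 ≠ 0)).mp hsummable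
    exact this
  rw [tsum_mul_left] at hparseval
  have htsum_c : ∑' m, c m = T^2 * ∫ x, ‖(FL : AddCircle T → ℂ) x‖ ^ 2
      ∂(@AddCircle.haarAddCircle T ⟨hT⟩) := by
    rw [← hparseval]
    field_simp
  rw [← ENNReal.ofReal_tsum_of_nonneg (fun m => by positivity) hsum_c, htsum_c,
    ENNReal.ofReal_mul (by positivity : (0:ℝ) ≤ T^2), hr]
  have hoT0 : (ENNReal.ofReal T) ≠ 0 := by simpa using hT
  have hoTt : (ENNReal.ofReal T) ≠ ⊤ := ENNReal.ofReal_ne_top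
  rw [show (T^2 : ℝ) = T * T by ring, ENNReal.ofReal_mul hT.le, ← mul_assoc, mul_assoc
    (ENNReal.ofReal T), ENNReal.mul_inv_cancel hoT0 hoTt, mul_one]

lemma periodize (α : ℝ) (hα : 0 < α) (v : ℝ → ℝ≥0∞) (hv : Measurable v) :
    (∫⁻ t in Set.Ioc 0 α, ∑' n : ℤ, v (t - (n:ℝ) * α)) = ∫⁻ t, v t := by
  rw [lintegral_tsum (μ := (volume : Measure ℝ).restrict (Set.Ioc 0 α))
    (f := fun (n : ℤ) (t : ℝ) => v (t - (n:ℝ) * α))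
    (fun n => (hv.comp (measurable_id.sub_const _)).aemeasurable)]
  have step : ∀ n : ℤ, (∫⁻ t in Set.Ioc 0 α, v (t - (n:ℝ) * α))
      = ∫⁻ t in Set.Ioc (-(n:ℝ) * α) (-(n:ℝ) * α + α), v t := by
    intro n
    have e1 : (∫⁻ t in Set.Ioc 0 α, v (t - (n:ℝ) * α))
        = ∫⁻ t, (Set.Ioc (-(n:ℝ) * α) (-(n:ℝ) * α + α)).indicator v (t - (n:ℝ) * α) := by
      rw [← lintegral_indicator measurableSet_Ioc]
      congr 1
      ext t
      by_cases ht : t ∈ Set.Ioc (0:ℝ) α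
      · rw [Set.indicator_of_mem ht, Set.indicator_of_mem]
        constructor
        · linarith [ht.1]
        · linarith [ht.2]
      · rw [Set.indicator_of_notMem ht, Set.indicator_of_notMem]
        intro hmem
        exact ht ⟨by linarith [hmem.1], by linarith [hmem.2]⟩
    rw [e1, (measurePreserving_sub_right volume ((n:ℝ) * α)).lintegral_comp
      (hv.indicator measurableSet_Ioc), lintegral_indicator measurableSet_Ioc]
  simp_rw [step]
  -- the intervals (-(n)α, -(n)α + α] partition ℝ
  have hdisj : Pairwise (Function.onFun Disjoint
      fun n : ℤ => Set.Ioc (-(n:ℝ) * α) (-(n:ℝ) * α + α)) := by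
    intro n m hnm
    rw [Function.onFun, Set.Ioc_disjoint_Ioc]
    rcases lt_or_gt_of_ne hnm with hlt | hlt
    · have : ((n:ℝ) + 1) ≤ m := by exact_mod_cast hlt
      refine le_trans (min_le_right _ _) (le_max_of_le_left ?_)
      nlinarith
    · have : ((m:ℝ) + 1) ≤ n := by exact_mod_cast hlt
      refine le_trans (min_le_left _ _) (le_max_of_le_right ?_)
      nlinarith
  have hunion : (⋃ n : ℤ, Set.Ioc (-(n:ℝ) * α) (-(n:ℝ) * α + α)) = Set.univ := by
    ext t
    simp only [Set.mem_iUnion, Set.mem_univ, iff_true]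
    refine ⟨1 - ⌈t / α⌉, ?_, ?_⟩
    · push_cast
      have h2 : (⌈t / α⌉ : ℝ) - 1 < t / α := by linarith [Int.ceil_lt_add_one (t / α)]
      have h3 := mul_lt_mul_of_pos_right h2 hα
      rw [div_mul_cancel₀ _ hα.ne'] at h3
      nlinarith
    · push_cast
      have h1 : t / α ≤ (⌈t / α⌉ : ℝ) := Int.le_ceil _
      have h3 := mul_le_mul_of_nonneg_right h1 hα.le
      rw [div_mul_cancel₀ _ hα.ne'] at h3
      nlinarith
  rw [← lintegral_iUnion (fun n => measurableSet_Ioc) hdisj, hunion, Measure.restrict_univ]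

lemma cellP (α β : ℝ) (hα : 0 < α) (hβ : 0 < β) (g : Lp ℂ 2 (volume : Measure ℝ))
    (a δ : ℝ) (hδ : 0 < δ) (hδβ : δ ≤ 1/β) (f : Lp ℂ 2 (volume : Measure ℝ))
    (hf : (f : ℝ → ℂ) =ᵐ[volume] (Set.Ioc a (a + δ)).indicator fun _ => (1:ℂ)) :
    ∑' p : ℤ × ℤ, ENNReal.ofReal
        (‖inn (f : ℝ → ℂ) (timeFreq ((p.2 : ℝ) * α, (p.1 : ℝ) * β) (g : ℝ → ℂ))‖ ^ 2)
      = ENNReal.ofReal (1/β) *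
          ∫⁻ t in Set.Ioc a (a + δ), ∑' n : ℤ, (‖(g : ℝ → ℂ) (t - n * α)‖₊ : ℝ≥0∞) ^ 2 := by
  set J : Set ℝ := Set.Ioc a (a + δ) with hJ
  have hJm : MeasurableSet J := measurableSet_Ioc
  have hg_sm : StronglyMeasurable (g : ℝ → ℂ) := Lp.stronglyMeasurable g
  -- the translated conjugated window
  set h : ℤ → ℝ → ℂ := fun n t => (starRingEnd ℂ) ((g : ℝ → ℂ) (t - (n:ℝ) * α)) with hh
  have hh_sm : ∀ n : ℤ, StronglyMeasurable (h n) := by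
    intro n
    exact Complex.continuous_conj.comp_stronglyMeasurable
      (hg_sm.comp_measurable (measurable_id.sub_const _))
  have hh_mem : ∀ n : ℤ, MemLp (h n) 2 (volume : Measure ℝ) := by
    intro n
    have h1 : MemLp (fun t : ℝ => (g : ℝ → ℂ) (t - (n:ℝ) * α)) 2 (volume : Measure ℝ) :=
      (Lp.memLp g).comp_measurePreserving (measurePreserving_sub_right volume ((n:ℝ) * α))
    refine ⟨(hh_sm n).aestronglyMeasurable, ?_⟩
    calc eLpNorm (h n) 2 volume
        = eLpNorm (fun t : ℝ => (g : ℝ → ℂ) (t - (n:ℝ) * α)) 2 volume := by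
          apply eLpNorm_congr_norm_ae
          exact Filter.Eventually.of_forall fun t => by simp [hh]
      _ < ⊤ := h1.2
  -- identify the inner product with the Fourier-type integral of rowP
  have hinner : ∀ m n : ℤ,
      inn (f : ℝ → ℂ) (timeFreq ((n : ℝ) * α, (m : ℝ) * β) (g : ℝ → ℂ))
        = ∫ t in J, Complex.exp (2 * Real.pi * Complex.I * (-m) * t / (1/β)) * h n t := by
    intro m n
    unfold inn
    rw [integral_congr_ae (hf.mono fun t ht => by rw [ht])]
    have e1 : ∀ t : ℝ, (J.indicator (fun _ => (1:ℂ)) t) *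
        (starRingEnd ℂ) (timeFreq ((n : ℝ) * α, (m : ℝ) * β) (g : ℝ → ℂ) t)
        = J.indicator (fun t => (starRingEnd ℂ)
            (timeFreq ((n : ℝ) * α, (m : ℝ) * β) (g : ℝ → ℂ) t)) t := by
      intro t
      by_cases ht : t ∈ J <;>
        simp [Set.indicator_of_mem, Set.indicator_of_notMem, ht]
    simp_rw [e1]
    rw [integral_indicator hJm]
    refine setIntegral_congr_fun hJm fun t _ => ?_
    simp only [timeFreq, Emod, Ttrans, map_mul]
    rw [← Complex.exp_conj]
    congr 1
    · congr 1
      simp only [map_mul, map_ofNat, Complex.conj_I, Complex.conj_ofReal]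
      push_cast
      field_simp
  -- sum over m for fixed n, using rowP
  have hrow : ∀ n : ℤ,
      (∑' m : ℤ, ENNReal.ofReal
        (‖inn (f : ℝ → ℂ) (timeFreq ((n : ℝ) * α, (m : ℝ) * β) (g : ℝ → ℂ))‖ ^ 2))
      = ENNReal.ofReal (1/β) * ∫⁻ t in J, (‖(g : ℝ → ℂ) (t - (n:ℝ) * α)‖₊ : ℝ≥0∞) ^ 2 := by
    intro n
    have := rowP (T := 1/β) (by positivity) (a := a) (δ := δ) hδ hδβ (hh_sm n) (hh_mem n)
    simp only [Complex.ofReal_div, Complex.ofReal_one] at this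
    simp only [hinner]
    rw [this]
    congr 1
    refine lintegral_congr fun t => ?_
    simp [hh]
  calc ∑' p : ℤ × ℤ, ENNReal.ofReal
        (‖inn (f : ℝ → ℂ) (timeFreq ((p.2 : ℝ) * α, (p.1 : ℝ) * β) (g : ℝ → ℂ))‖ ^ 2)
      = ∑' m : ℤ, ∑' n : ℤ, ENNReal.ofReal
        (‖inn (f : ℝ → ℂ) (timeFreq ((n : ℝ) * α, (m : ℝ) * β) (g : ℝ → ℂ))‖ ^ 2) :=
        ENNReal.tsum_prod'
    _ = ∑' n : ℤ, ∑' m : ℤ, ENNReal.ofReal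
        (‖inn (f : ℝ → ℂ) (timeFreq ((n : ℝ) * α, (m : ℝ) * β) (g : ℝ → ℂ))‖ ^ 2) :=
        ENNReal.tsum_comm
    _ = ∑' n : ℤ, ENNReal.ofReal (1/β) *
          ∫⁻ t in J, (‖(g : ℝ → ℂ) (t - (n:ℝ) * α)‖₊ : ℝ≥0∞) ^ 2 := by
        exact tsum_congr hrow
    _ = ENNReal.ofReal (1/β) * ∑' n : ℤ,
          ∫⁻ t in J, (‖(g : ℝ → ℂ) (t - (n:ℝ) * α)‖₊ : ℝ≥0∞) ^ 2 := ENNReal.tsum_mul_left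
    _ = ENNReal.ofReal (1/β) *
          ∫⁻ t in J, ∑' n : ℤ, (‖(g : ℝ → ℂ) (t - (n:ℝ) * α)‖₊ : ℝ≥0∞) ^ 2 := by
        congr 1
        rw [← lintegral_tsum fun n => ?_]
        exact ((hg_sm.comp_measurable (measurable_id.sub_const _)).measurable.nnnorm.coe_nnreal_ennreal.pow_const _).aemeasurable

/-- Frame norm bounds for the generator: if `{E_{mβ}T_{nα} g}_{m,n∈ℤ}` is a frame for `L²(ℝ)`
with frame bounds `A, B`, then `A·αβ ≤ ‖g‖₂² ≤ B·αβ`. Note `E_{mβ}T_{nα} = π(nα, mβ)`. -/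
theorem stmt14 (α β A B : ℝ) (hα : 0 < α) (hβ : 0 < β) (hA : 0 < A) (hB : 0 < B)
    (g : Lp ℂ 2 (volume : Measure ℝ))
    (hframe : ∀ f : Lp ℂ 2 (volume : Measure ℝ),
      A * ‖f‖ ^ 2 ≤
        (∑' p : ℤ × ℤ,
          ‖inn (f : ℝ → ℂ) (timeFreq ((p.2 : ℝ) * α, (p.1 : ℝ) * β) (g : ℝ → ℂ))‖ ^ 2) ∧
      (∑' p : ℤ × ℤ,
          ‖inn (f : ℝ → ℂ) (timeFreq ((p.2 : ℝ) * α, (p.1 : ℝ) * β) (g : ℝ → ℂ))‖ ^ 2) ≤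
        B * ‖f‖ ^ 2) :
    A * (α * β) ≤ ‖g‖ ^ 2 ∧ ‖g‖ ^ 2 ≤ B * (α * β) := by
  classical
  set v : ℝ → ℝ≥0∞ := fun t => (‖(g : ℝ → ℂ) t‖₊ : ℝ≥0∞) ^ 2 with hv
  have hv_meas : Measurable v :=
    ((Lp.stronglyMeasurable g).measurable.nnnorm.coe_nnreal_ennreal.pow_const _)
  set G : ℝ → ℝ≥0∞ := fun t => ∑' n : ℤ, v (t - (n:ℝ) * α) with hG
  -- choose the subdivision
  set N : ℕ := max 1 ⌈α * β⌉₊ with hN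
  have hN1 : 1 ≤ N := le_max_left _ _
  have hN0 : (0:ℝ) < N := by exact_mod_cast hN1
  have hNαβ : α * β ≤ N := by
    calc α * β ≤ (⌈α * β⌉₊ : ℝ) := Nat.le_ceil _
      _ ≤ N := by exact_mod_cast le_max_right 1 ⌈α * β⌉₊
  set δ : ℝ := α / N with hδdef
  have hδ : 0 < δ := div_pos hα hN0
  have hδβ : δ ≤ 1 / β := by
    rw [div_le_div_iff₀ hN0 hβ]
    nlinarith
  -- bound for each cell
  have cell_bound : ∀ a : ℝ,
      ENNReal.ofReal (A * β * δ) ≤ (∫⁻ t in Set.Ioc a (a + δ), G t) ∧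
      (∫⁻ t in Set.Ioc a (a + δ), G t) ≤ ENNReal.ofReal (B * β * δ) := by
    intro a
    have hvol : (volume : Measure ℝ) (Set.Ioc a (a + δ)) = ENNReal.ofReal δ := by
      rw [Real.volume_Ioc]; congr 1; ring
    have hvolne : (volume : Measure ℝ) (Set.Ioc a (a + δ)) ≠ ⊤ := by
      rw [hvol]; exact ENNReal.ofReal_ne_top
    set f : Lp ℂ 2 (volume : Measure ℝ) :=
      indicatorConstLp 2 measurableSet_Ioc hvolne (1:ℂ) with hfdef
    have hf_coe : (f : ℝ → ℂ) =ᵐ[volume] (Set.Ioc a (a + δ)).indicator fun _ => (1:ℂ) :=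
      indicatorConstLp_coeFn
    have hfn : ‖f‖ ^ 2 = δ := by
      rw [hfdef, norm_indicatorConstLp two_ne_zero ENNReal.ofNat_ne_top]
      rw [measureReal_def, hvol, ENNReal.toReal_ofReal hδ.le]
      have h3 : ((2:ℝ≥0∞).toReal) = (2:ℝ) := by norm_num
      rw [h3, norm_one, one_mul, ← Real.rpow_natCast (δ ^ ((1:ℝ)/2)) 2, ← Real.rpow_mul hδ.le]
      norm_num
    have hcell := cellP α β hα hβ g a δ hδ hδβ f hf_coe
    have hfr := hframe f
    rw [hfn] at hfr
    set u : ℤ × ℤ → ℝ := fun p =>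
      ‖inn (f : ℝ → ℂ) (timeFreq ((p.2 : ℝ) * α, (p.1 : ℝ) * β) (g : ℝ → ℂ))‖ ^ 2 with hu
    have hu_nonneg : ∀ p, 0 ≤ u p := fun p => by positivity
    set S : ℝ≥0∞ := ∑' p : ℤ × ℤ, ENNReal.ofReal (u p) with hS
    have hSne : S ≠ ⊤ := by
      intro htop
      have hnsum : ¬ Summable u := by
        intro hsum
        rw [hS, ← ENNReal.ofReal_tsum_of_nonneg hu_nonneg hsum] at htop
        exact ENNReal.ofReal_ne_top htop
      have h0 : (∑' p, u p) = 0 := tsum_eq_zero_of_not_summable hnsum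
      have := hfr.1
      rw [h0] at this
      nlinarith
    have htsum : (∑' p, u p) = S.toReal := by
      rw [hS, ENNReal.tsum_toReal_eq fun p => ENNReal.ofReal_ne_top]
      exact tsum_congr fun p => (ENNReal.toReal_ofReal (hu_nonneg p)).symm
    have hScell : S = ENNReal.ofReal (1/β) * ∫⁻ t in Set.Ioc a (a + δ), G t := hcell
    have hIne : (∫⁻ t in Set.Ioc a (a + δ), G t) ≠ ⊤ := by
      intro htop
      rw [hScell, htop, ENNReal.mul_top (by simpa using (by positivity : (0:ℝ) < 1/β))] at hSne
      exact hSne rfl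
    have hStoReal : S.toReal = (1/β) * (∫⁻ t in Set.Ioc a (a + δ), G t).toReal := by
      rw [hScell, ENNReal.toReal_mul, ENNReal.toReal_ofReal (by positivity)]
    have h1 : A * β * δ ≤ (∫⁻ t in Set.Ioc a (a + δ), G t).toReal := by
      have := hfr.1
      rw [htsum, hStoReal] at this
      have h6 := mul_le_mul_of_nonneg_right this hβ.le
      have h7 : 1/β * (∫⁻ t in Set.Ioc a (a + δ), G t).toReal * β
          = (∫⁻ t in Set.Ioc a (a + δ), G t).toReal := by field_simp
      rw [h7] at h6
      linarith
    have h2 : (∫⁻ t in Set.Ioc a (a + δ), G t).toReal ≤ B * β * δ := by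
      have := hfr.2
      rw [htsum, hStoReal] at this
      have h6 := mul_le_mul_of_nonneg_right this hβ.le
      have h7 : 1/β * (∫⁻ t in Set.Ioc a (a + δ), G t).toReal * β
          = (∫⁻ t in Set.Ioc a (a + δ), G t).toReal := by field_simp
      rw [h7] at h6
      linarith
    constructor
    · calc ENNReal.ofReal (A * β * δ)
          ≤ ENNReal.ofReal ((∫⁻ t in Set.Ioc a (a + δ), G t).toReal) :=
            ENNReal.ofReal_le_ofReal h1
        _ = ∫⁻ t in Set.Ioc a (a + δ), G t := ENNReal.ofReal_toReal hIne
    · calc (∫⁻ t in Set.Ioc a (a + δ), G t)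
          = ENNReal.ofReal ((∫⁻ t in Set.Ioc a (a + δ), G t).toReal) :=
            (ENNReal.ofReal_toReal hIne).symm
        _ ≤ ENNReal.ofReal (B * β * δ) := ENNReal.ofReal_le_ofReal h2
  -- piece the cells together
  have pieces : ∀ k : ℕ,
      ENNReal.ofReal (A * β * (k * δ)) ≤ (∫⁻ t in Set.Ioc 0 ((k:ℝ) * δ), G t) ∧
      (∫⁻ t in Set.Ioc 0 ((k:ℝ) * δ), G t) ≤ ENNReal.ofReal (B * β * (k * δ)) := by
    intro k
    induction k with
    | zero => simp
    | succ k ih =>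
      push_cast
      have hk0 : (0:ℝ) ≤ (k:ℝ) * δ := by positivity
      have hsplit : Set.Ioc (0:ℝ) (((k:ℝ)+1) * δ)
          = Set.Ioc 0 ((k:ℝ) * δ) ∪ Set.Ioc ((k:ℝ) * δ) ((k:ℝ) * δ + δ) := by
        rw [Set.Ioc_union_Ioc_eq_Ioc hk0 (by nlinarith)]
        congr 1
        ring
      have hdisj : Disjoint (Set.Ioc (0:ℝ) ((k:ℝ) * δ))
          (Set.Ioc ((k:ℝ) * δ) ((k:ℝ) * δ + δ)) := by
        rw [Set.Ioc_disjoint_Ioc]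
        exact le_trans (min_le_left _ _) (le_max_right _ _)
      have hsum : (∫⁻ t in Set.Ioc (0:ℝ) (((k:ℝ)+1) * δ), G t)
          = (∫⁻ t in Set.Ioc (0:ℝ) ((k:ℝ) * δ), G t)
            + ∫⁻ t in Set.Ioc ((k:ℝ) * δ) ((k:ℝ) * δ + δ), G t := by
        rw [hsplit, lintegral_union measurableSet_Ioc hdisj]
      have hc := cell_bound ((k:ℝ) * δ)
      constructor
      · have he : ENNReal.ofReal (A * β * (((k:ℝ)+1) * δ))
            = ENNReal.ofReal (A * β * (k * δ)) + ENNReal.ofReal (A * β * δ) := by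
          rw [← ENNReal.ofReal_add (by positivity) (by positivity)]
          congr 1
          ring
        rw [hsum, he]
        exact add_le_add ih.1 hc.1
      · have he : ENNReal.ofReal (B * β * (((k:ℝ)+1) * δ))
            = ENNReal.ofReal (B * β * (k * δ)) + ENNReal.ofReal (B * β * δ) := by
          rw [← ENNReal.ofReal_add (by positivity) (by positivity)]
          congr 1
          ring
        rw [hsum, he]
        exact add_le_add ih.2 hc.2
  -- total bound over (0, α]
  have hNδ : ((N:ℝ)) * δ = α := by
    rw [hδdef]
    field_simp
  have total := pieces N
  rw [hNδ] at total
  -- periodization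
  have hper : (∫⁻ t in Set.Ioc 0 α, G t) = ∫⁻ t, v t := periodize α hα v hv_meas
  rw [hper] at total
  have hLne : (∫⁻ t, v t) ≠ ⊤ :=
    ne_top_of_le_ne_top ENNReal.ofReal_ne_top total.2
  -- the norm of g
  have h4 : ∀ x : ℝ≥0∞, (x ^ ((1:ℝ)/2)).toReal ^ (2:ℕ) = x.toReal := by
    intro x
    rw [← ENNReal.toReal_pow, ← ENNReal.rpow_natCast (x ^ ((1:ℝ)/2)) 2, ← ENNReal.rpow_mul]
    norm_num
  have hnorm : ‖g‖ ^ 2 = (∫⁻ t, v t).toReal := by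
    rw [Lp.norm_def, eLpNorm_eq_lintegral_rpow_enorm_toReal two_ne_zero ENNReal.ofNat_ne_top]
    simp only [enorm_eq_nnnorm]
    have h3 : ((2:ℝ≥0∞).toReal) = ((2:ℕ):ℝ) := by norm_num
    simp only [h3, ENNReal.rpow_natCast]
    norm_num
    exact h4 _
  rw [hnorm]
  constructor
  · have h5 := ENNReal.toReal_mono hLne total.1
    rw [ENNReal.toReal_ofReal (by positivity)] at h5
    rw [show A * (α * β) = A * β * α from by ring]
    exact h5
  · have h5 := ENNReal.toReal_mono ENNReal.ofReal_ne_top total.2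
    rw [ENNReal.toReal_ofReal (by positivity)] at h5
    rw [show B * (α * β) = B * β * α from by ring]
    exact h5
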